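/- Let k ≤ 0 be an integer and n ≠ 0 a real number. For the function φ(τ) = Γ(1−k, 4π|n|y) e^{2πinτ} with n < 0 (where τ = x+iy and Γ(a,y) is the incomplete Gamma function), one has D^{1−k} φ = 0, where D^{1−k} is computed via Bol's identity as (−4π)^{k−1} times the (1−k)-fold iterated raising operator R_k^{1−k}. -/

import Mathlib

open Complex Real

/-- The upper incomplete Gamma function `Γ(a, y) = ∫_y^∞ e^{−t} t^{a−1} dt`. -/
noncomputable def incGamma (a y : ℝ) : ℝ :=
  ∫ t in Set.Ioi y, Real.exp (-t) * t ^ (a - 1)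

/-- The Wirtinger derivative `∂/∂τ = (1/2)(∂/∂x − i ∂/∂y)` of a function on `ℂ`. -/
noncomputable def dtau (f : ℂ → ℂ) (z : ℂ) : ℂ :=
  (1 / 2 : ℂ) * (fderiv ℝ f z 1 - Complex.I * fderiv ℝ f z Complex.I)

/-- The Maass raising operator `R_ℓ = 2i ∂/∂τ + ℓ y⁻¹` of weight `ℓ`. -/
noncomputable def raise (ℓ : ℤ) (f : ℂ → ℂ) (z : ℂ) : ℂ :=
  2 * Complex.I * dtau f z + (ℓ : ℂ) * (z.im : ℂ)⁻¹ * f z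

/-- The `n`-fold iterated raising operator
`R_k^n = R_{k+2(n−1)} ∘ ⋯ ∘ R_{k+2} ∘ R_k`. -/
noncomputable def raiseIter (k : ℤ) : ℕ → (ℂ → ℂ) → (ℂ → ℂ)
  | 0, f => f
  | n + 1, f => raise (k + 2 * n) (raiseIter k n f)

open MeasureTheory Filter Topology Finset in
private lemma incGamma_nat_closed (m : ℕ) {u : ℝ} (hu : 0 < u) :
    incGamma ((m : ℝ) + 1) u =
      Real.exp (-u) * ∑ s ∈ Finset.range (m + 1),
        ((m.factorial : ℝ) / s.factorial) * u ^ s := by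
  set q : ℝ → ℝ := fun t => ∑ s ∈ Finset.range (m + 1),
      ((m.factorial : ℝ) / s.factorial) * t ^ s with hq
  have key : ∀ t : ℝ, HasDerivAt (fun t : ℝ => -(Real.exp (-t) * q t))
      (Real.exp (-t) * t ^ m) t := by
    intro t
    have hqd : HasDerivAt q (q t - t ^ m) t := by
      have h := HasDerivAt.fun_sum (u := Finset.range (m + 1))
        (A := fun s => fun t : ℝ => ((m.factorial : ℝ) / s.factorial) * t ^ s)
        (A' := fun s => ((m.factorial : ℝ) / s.factorial) * (s * t ^ (s - 1)))
        (fun s _ => (hasDerivAt_pow s t).const_mul _)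
      refine h.congr_deriv (Eq.symm ?_)
      rw [Finset.sum_range_succ' (fun s => ((m.factorial : ℝ) / s.factorial) * (↑s * t ^ (s - 1)))]
      simp only [hq]
      rw [Finset.sum_range_succ (fun s => ((m.factorial : ℝ) / s.factorial) * t ^ s)]
      have hmm : ((m.factorial : ℝ) / m.factorial) = 1 := by
        rw [div_self]; exact_mod_cast m.factorial_ne_zero
      rw [hmm]
      simp only [Nat.cast_zero, pow_zero, mul_zero, zero_mul, add_zero, one_mul,
        add_sub_cancel_right]
      refine Finset.sum_congr rfl fun i _ => ?_
      rw [Nat.factorial_succ]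
      have hne : (i.factorial : ℝ) ≠ 0 := by exact_mod_cast i.factorial_ne_zero
      push_cast
      field_simp
    have hexp : HasDerivAt (fun t : ℝ => Real.exp (-t)) (-Real.exp (-t)) t := by
      simpa [Function.comp_def] using ((Real.hasDerivAt_exp (-t)).comp t (hasDerivAt_neg t))
    have := ((hexp.fun_mul hqd).fun_neg)
    refine this.congr_deriv ?_
    ring
  have hint : IntegrableOn (fun t : ℝ => Real.exp (-t) * t ^ m) (Set.Ioi u) := by
    have h' := Real.GammaIntegral_convergent (s := (m : ℝ) + 1) (by positivity)
    have h'' : IntegrableOn (fun t : ℝ => Real.exp (-t) * t ^ m) (Set.Ioi 0) := by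
      refine h'.congr_fun (fun t _ => ?_) measurableSet_Ioi
      rw [add_sub_cancel_right]; simp only [Real.rpow_natCast]
    exact h''.mono_set (Set.Ioi_subset_Ioi hu.le)
  have hlim : Tendsto (fun t : ℝ => -(Real.exp (-t) * q t)) atTop (𝓝 0) := by
    have h0 : Tendsto (fun t : ℝ => Real.exp (-t) * q t) atTop (𝓝 0) := by
      have h1 : Tendsto (fun t : ℝ => ∑ s ∈ Finset.range (m + 1),
          ((m.factorial : ℝ) / s.factorial) * (t ^ s * Real.exp (-t))) atTop (𝓝 0) := by
        have := tendsto_finset_sum (Finset.range (m + 1))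
          (fun s _ => (Real.tendsto_pow_mul_exp_neg_atTop_nhds_zero s).const_mul
            ((m.factorial : ℝ) / s.factorial))
        simpa using this
      refine h1.congr (fun t => ?_)
      simp only [hq, Finset.mul_sum]
      refine Finset.sum_congr rfl fun s _ => by ring
    simpa using h0.neg
  have hInt := integral_Ioi_of_hasDerivAt_of_tendsto' (a := u)
    (f := fun t : ℝ => -(Real.exp (-t) * q t))
    (f' := fun t : ℝ => Real.exp (-t) * t ^ m)
    (fun x _ => key x) hint hlim
  have : incGamma ((m : ℝ) + 1) u = ∫ t in Set.Ioi u, Real.exp (-t) * t ^ m := by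
    unfold incGamma
    refine setIntegral_congr_fun measurableSet_Ioi (fun t _ => ?_)
    rw [add_sub_cancel_right, Real.rpow_natCast]
  rw [this, hInt]
  ring

open Filter in
private lemma raise_apply (ℓ : ℤ) (c1 : ℂ) (g gd : ℝ → ℂ) (f : ℂ → ℂ)
    (hf : ∀ w : ℂ, 0 < w.im → f w = g w.im * Complex.exp (c1 * (starRingEnd ℂ) w))
    (hg : ∀ y : ℝ, 0 < y → HasDerivAt g (gd y) y)
    (z : ℂ) (hz : 0 < z.im) :
    raise ℓ f z =
      (gd z.im + (ℓ : ℂ) * (z.im : ℂ)⁻¹ * g z.im) *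
        Complex.exp (c1 * (starRingEnd ℂ) z) := by
  have hopen : IsOpen {w : ℂ | 0 < w.im} := isOpen_lt continuous_const Complex.continuous_im
  have hmem : {w : ℂ | 0 < w.im} ∈ nhds z := hopen.mem_nhds hz
  have heq : f =ᶠ[nhds z]
      (fun w : ℂ => g w.im * Complex.exp (c1 * (starRingEnd ℂ) w)) :=
    eventuallyEq_of_mem hmem (fun w hw => hf w hw)
  set L1 : ℂ →L[ℝ] ℂ :=
    (ContinuousLinearMap.smulRight (1 : ℝ →L[ℝ] ℝ) (gd z.im)).comp Complex.imCLM with hL1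
  have h1 : HasFDerivAt (fun w : ℂ => g w.im) L1 z :=
    ((hg z.im hz).hasFDerivAt).comp z Complex.imCLM.hasFDerivAt
  set C : ℂ →L[ℝ] ℂ := Complex.conjCLE.toContinuousLinearMap with hC
  have hconj : HasFDerivAt (fun w : ℂ => c1 * (starRingEnd ℂ) w) (c1 • C) z :=
    C.hasFDerivAt.const_mul c1
  set E : ℂ → ℂ := fun w => Complex.exp (c1 * (starRingEnd ℂ) w) with hE
  have h2 : HasFDerivAt E
      ((Complex.exp (c1 * (starRingEnd ℂ) z)) • (c1 • C)) z :=
    (Complex.hasDerivAt_exp _).comp_hasFDerivAt z hconj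
  have hψ : HasFDerivAt (fun w : ℂ => g w.im * E w)
      (g z.im • ((Complex.exp (c1 * (starRingEnd ℂ) z)) • (c1 • C)) + E z • L1) z :=
    h1.mul h2
  have hfd : fderiv ℝ f z
      = g z.im • ((Complex.exp (c1 * (starRingEnd ℂ) z)) • (c1 • C)) + E z • L1 := by
    rw [heq.fderiv_eq, hψ.fderiv]
  rw [raise, dtau, hfd, hf z hz]
  simp only [hL1, hC, hE, ContinuousLinearMap.add_apply, ContinuousLinearMap.coe_smul',
    Pi.smul_apply, smul_eq_mul, ContinuousLinearMap.comp_apply,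
    ContinuousLinearMap.smulRight_apply, ContinuousLinearMap.one_apply,
    Complex.imCLM_apply, ContinuousLinearEquiv.coe_coe, Complex.conjCLE_apply,
    map_one, Complex.conj_I, Complex.one_im, Complex.I_im]
  simp only [Complex.real_smul, Complex.ofReal_zero, Complex.ofReal_one]
  linear_combination (Complex.I * c1 * g z.im * Complex.exp (c1 * (starRingEnd ℂ) z) -
    Complex.exp (c1 * (starRingEnd ℂ) z) * gd z.im) * Complex.I_sq

/-- For an integer `k ≤ 0` and a real number `n < 0`, Bol's
operator `D^{1−k} = (−4π)^{k−1} R_k^{1−k}` annihilates the non-holomorphic term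
`φ(τ) = Γ(1−k, 4π|n|y) e^{2πinτ}` on the upper half plane. -/
theorem bol_annihilates_nonholomorphic_part (k : ℤ) (hk : k ≤ 0)
    (n : ℝ) (hn : n < 0) :
    ∀ z : ℂ, 0 < z.im →
      ((-4 * (π : ℂ)) ^ (k - 1)) *
        raiseIter k (1 - k).toNat
          (fun w : ℂ =>
            (incGamma (1 - k) (4 * π * |n| * w.im) : ℂ) *
              Complex.exp (2 * π * Complex.I * n * w)) z = 0 := by
  intro z hz
  set mN : ℕ := (-k).toNat with hmN
  have hmNZ : ((mN : ℤ)) = -k := by omega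
  have ha : (1 - k).toNat = mN + 1 := by omega
  set c : ℝ := 4 * π * |n| with hc
  have hcpos : 0 < c := by
    have : 0 < |n| := abs_pos.mpr hn.ne
    positivity
  set c1 : ℂ := 2 * π * Complex.I * n with hc1
  set φ : ℂ → ℂ := fun w : ℂ =>
      (incGamma (1 - k) (4 * π * |n| * w.im) : ℂ) *
        Complex.exp (2 * π * Complex.I * n * w) with hφ
  -- coefficients and model functions
  set Co : ℕ → ℕ → ℂ := fun m s =>
    (∏ j ∈ Finset.range m, ((s : ℂ) + j + k)) *
      ((mN.factorial : ℝ) / s.factorial : ℝ) * (c : ℂ) ^ s with hCo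
  set V : ℕ → ℝ → ℂ := fun m y =>
    ∑ s ∈ Finset.range (mN + 1), Co m s * ((y ^ ((s : ℤ) - m) : ℝ) : ℂ) with hV
  set Vd : ℕ → ℝ → ℂ := fun m y =>
    ∑ s ∈ Finset.range (mN + 1),
      Co m s * ((((s : ℤ) - m : ℤ) * y ^ ((s : ℤ) - m - 1) : ℝ) : ℂ) with hVd
  have hVderiv : ∀ m : ℕ, ∀ y : ℝ, 0 < y → HasDerivAt (V m) (Vd m y) y := by
    intro m y hy
    refine HasDerivAt.fun_sum (fun s _ => ?_)
    exact ((hasDerivAt_zpow ((s : ℤ) - m) y (Or.inl hy.ne')).ofReal_comp).const_mul _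
  have hRec : ∀ m : ℕ, ∀ y : ℝ, 0 < y →
      Vd m y + ((k + 2 * (m : ℤ) : ℤ) : ℂ) * ((y : ℝ) : ℂ)⁻¹ * V m y = V (m + 1) y := by
    intro m y hy
    have hY : ((y : ℝ) : ℂ) ≠ 0 := by exact_mod_cast hy.ne'
    simp only [hV, hVd, Finset.mul_sum]
    rw [← Finset.sum_add_distrib]
    refine Finset.sum_congr rfl fun s _ => ?_
    have hCoS : Co (m + 1) s = ((s : ℂ) + m + k) * Co m s := by
      simp only [hCo, Finset.prod_range_succ]
      ring
    have h1 : ((s : ℤ) - (m + 1 : ℕ) : ℤ) = ((s : ℤ) - m) - 1 := by push_cast; ring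
    rw [hCoS, h1]
    push_cast [Complex.ofReal_zpow]
    rw [zpow_sub_one₀ hY]
    ring
  -- base case
  have hBase : ∀ w : ℂ, 0 < w.im →
      φ w = V 0 w.im * Complex.exp (c1 * (starRingEnd ℂ) w) := by
    intro w hw
    have hu : 0 < c * w.im := mul_pos hcpos hw
    have harg : (1 : ℝ) - (k : ℝ) = (mN : ℝ) + 1 := by
      have : ((mN : ℤ) : ℝ) = -(k : ℝ) := by exact_mod_cast congrArg Int.cast hmNZ
      push_cast at this ⊢
      linarith
    have hgam : incGamma (1 - (k : ℝ)) (4 * π * |n| * w.im)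
        = Real.exp (-(c * w.im)) * ∑ s ∈ Finset.range (mN + 1),
            ((mN.factorial : ℝ) / s.factorial) * (c * w.im) ^ s := by
      rw [harg, ← hc]
      exact incGamma_nat_closed mN hu
    have hsplit : Complex.exp (c1 * w)
        = Complex.exp ((c * w.im : ℝ) : ℂ) * Complex.exp (c1 * (starRingEnd ℂ) w) := by
      rw [← Complex.exp_add]
      congr 1
      have hsc := Complex.sub_conj w
      push_cast at hsc
      have habs : |n| = -n := abs_of_neg hn
      rw [hc1, hc, habs]
      push_cast
      linear_combination (2 * (π : ℂ) * Complex.I * n) * hsc +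
        (4 * (π : ℂ) * n * w.im) * Complex.I_sq
    have hφw : φ w = (incGamma (1 - (k : ℝ)) (4 * π * |n| * w.im) : ℂ) *
        Complex.exp (c1 * w) := rfl
    rw [hφw, hgam, hsplit]
    have hsum : ((Real.exp (-(c * w.im)) * ∑ s ∈ Finset.range (mN + 1),
          ((mN.factorial : ℝ) / s.factorial) * (c * w.im) ^ s : ℝ) : ℂ)
          * Complex.exp ((c * w.im : ℝ) : ℂ) = V 0 w.im := by
      have hee : Complex.exp (-((c * w.im : ℝ) : ℂ)) * Complex.exp ((c * w.im : ℝ) : ℂ)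
          = 1 := by
        rw [← Complex.exp_add, neg_add_cancel, Complex.exp_zero]
      rw [hV, Complex.ofReal_mul, Complex.ofReal_exp, Complex.ofReal_neg]
      calc (Complex.exp (-((c * w.im : ℝ) : ℂ)) * ((∑ s ∈ Finset.range (mN + 1),
              ((mN.factorial : ℝ) / s.factorial) * (c * w.im) ^ s : ℝ) : ℂ))
            * Complex.exp ((c * w.im : ℝ) : ℂ)
          = ((∑ s ∈ Finset.range (mN + 1),
              ((mN.factorial : ℝ) / s.factorial) * (c * w.im) ^ s : ℝ) : ℂ) *
            (Complex.exp (-((c * w.im : ℝ) : ℂ)) * Complex.exp ((c * w.im : ℝ) : ℂ)) := by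
            ring
        _ = ((∑ s ∈ Finset.range (mN + 1),
              ((mN.factorial : ℝ) / s.factorial) * (c * w.im) ^ s : ℝ) : ℂ) := by
            rw [hee, mul_one]
        _ = ∑ s ∈ Finset.range (mN + 1), Co 0 s * ((w.im ^ ((s : ℤ) - (0 : ℕ)) : ℝ) : ℂ) := by
            push_cast
            refine Finset.sum_congr rfl fun s _ => ?_
            simp only [hCo, Finset.prod_range_zero, one_mul, CharP.cast_eq_zero,
              sub_zero, zpow_natCast]
            push_cast
            ring
    calc (↑(Real.exp (-(c * w.im)) * ∑ s ∈ Finset.range (mN + 1),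
            ((mN.factorial : ℝ) / s.factorial) * (c * w.im) ^ s) : ℂ) *
          (Complex.exp ((c * w.im : ℝ) : ℂ) * Complex.exp (c1 * (starRingEnd ℂ) w))
        = (((Real.exp (-(c * w.im)) * ∑ s ∈ Finset.range (mN + 1),
            ((mN.factorial : ℝ) / s.factorial) * (c * w.im) ^ s : ℝ) : ℂ)
            * Complex.exp ((c * w.im : ℝ) : ℂ)) * Complex.exp (c1 * (starRingEnd ℂ) w) := by
          ring
      _ = V 0 w.im * Complex.exp (c1 * (starRingEnd ℂ) w) := by rw [hsum]
  -- induction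
  have hMain : ∀ m : ℕ, ∀ w : ℂ, 0 < w.im →
      raiseIter k m φ w = V m w.im * Complex.exp (c1 * (starRingEnd ℂ) w) := by
    intro m
    induction m with
    | zero => exact hBase
    | succ m ih =>
      intro w hw
      show raise (k + 2 * (m : ℤ)) (raiseIter k m φ) w = _
      rw [raise_apply (k + 2 * (m : ℤ)) c1 (V m) (Vd m) (raiseIter k m φ) ih
        (fun y hy => hVderiv m y hy) w hw]
      have := hRec m w.im hw
      push_cast at this ⊢
      rw [this]
  have hzero : V (mN + 1) z.im = 0 := by
    rw [hV]
    refine Finset.sum_eq_zero fun s hs => ?_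
    have hsle : s ≤ mN := Nat.lt_succ_iff.mp (Finset.mem_range.mp hs)
    have : Co (mN + 1) s = 0 := by
      simp only [hCo]
      have hjz : ((s : ℂ) + ((mN - s : ℕ) : ℂ) + k) = 0 := by
        have h1 : ((s : ℂ) + ((mN - s : ℕ) : ℂ)) = (mN : ℂ) := by
          push_cast [Nat.cast_sub hsle]; ring
        rw [h1]
        have : ((mN : ℤ) : ℂ) = -(k : ℂ) := by exact_mod_cast congrArg Int.cast hmNZ
        push_cast at this
        rw [this]; ring
      have hp : (∏ j ∈ Finset.range (mN + 1), ((s : ℂ) + j + k)) = 0 :=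
        Finset.prod_eq_zero (Finset.mem_range.mpr (Nat.lt_succ_of_le (Nat.sub_le mN s))) hjz
      rw [hp, zero_mul, zero_mul]
    rw [this, zero_mul]
  rw [ha]
  rw [hMain (mN + 1) z hz, hzero, zero_mul, mul_zero]
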